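/- Let α ∈ ℝ, let v_-, v_+ be periodic stationary solutions with constant α such that v_-(x) < v_+(x) for all x, assume the Oleinik condition (every periodic stationary solution w with constant α satisfying v_- ≤ w ≤ v_+ pointwise equals v_- or v_+ identically), and let (v_l, v_r) be either (v_-, v_+) or (v_+, v_-). Let U be a shock profile connecting v_l to v_r, and let u ∈ L∞(ℝ) with u − U ∈ L¹(ℝ), ∫_ℝ (u − U) = 0, and v_-(y) ≤ u(y) ≤ v_+(y) for almost every y ∈ ℝ. Then for every ε > 0 there exist a function u^ε with u^ε − U ∈ L¹(ℝ) and ∫_ℝ (u^ε − U) = 0, and shock profiles U^ε_- and U^ε_+ connecting v_l to v_r, such that ‖u − u^ε‖_{L¹(ℝ)} ≤ ε and U^ε_-(y) ≤ u^ε(y) ≤ U^ε_+(y) for almost every y ∈ ℝ. -/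

import Mathlib

open MeasureTheory Filter Set Topology
open scoped NNReal

/-- A periodic stationary solution of the viscous conservation law, with
constant `α`. -/
def PerStat (A : ℝ → ℝ → ℝ) (α : ℝ) (v : ℝ → ℝ) : Prop :=
  ContDiff ℝ 1 v ∧ (∀ x, v (x + 1) = v x) ∧ ∀ x, deriv v x = A x (v x) - α

/-- A shock profile connecting `vl` to `vr`, with constant `α`. -/
def ShockProfile (A : ℝ → ℝ → ℝ) (α : ℝ) (vl vr U : ℝ → ℝ) : Prop :=
  ContDiff ℝ 1 U ∧ (∀ x, deriv U x = A x (U x) - α) ∧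
  Filter.Tendsto (fun x => U x - vl x) Filter.atBot (nhds 0) ∧
  Filter.Tendsto (fun x => U x - vr x) Filter.atTop (nhds 0)


private lemma per_int {v : ℝ → ℝ} (h : ∀ x, v (x + 1) = v x) (n : ℤ) (x : ℝ) :
    v (x + n) = v x := by
  have hp : Function.Periodic v 1 := h
  have := (hp.int_mul n) x
  simpa using this

private lemma per_tendsto_zero_atBot {p : ℝ → ℝ} (hp : ∀ x, p (x + 1) = p x)
    (h : Tendsto p atBot (nhds 0)) (x : ℝ) : p x = 0 := by
  have h1 : Tendsto (fun n : ℕ => x + (-(n:ℤ) : ℤ)) atTop atBot := by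
    simp only [Int.cast_neg, Int.cast_natCast]
    exact tendsto_atBot_add_const_left _ x (tendsto_neg_atBot_iff.mpr tendsto_natCast_atTop_atTop)
  have h2 : Tendsto (fun n : ℕ => p (x + (-(n:ℤ) : ℤ))) atTop (nhds 0) := h.comp h1
  have h3 : (fun n : ℕ => p (x + (-(n:ℤ) : ℤ))) = fun _ => p x := by
    funext n; exact per_int hp _ x
  rw [h3] at h2
  exact tendsto_nhds_unique tendsto_const_nhds h2

private lemma per_tendsto_zero_atTop {p : ℝ → ℝ} (hp : ∀ x, p (x + 1) = p x)
    (h : Tendsto p atTop (nhds 0)) (x : ℝ) : p x = 0 := by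
  have h1 : Tendsto (fun n : ℕ => x + ((n:ℤ) : ℝ)) atTop atTop := by
    simp only [Int.cast_natCast]
    exact tendsto_atTop_add_const_left _ x tendsto_natCast_atTop_atTop
  have h2 : Tendsto (fun n : ℕ => p (x + ((n:ℤ):ℝ))) atTop (nhds 0) := h.comp h1
  have h3 : (fun n : ℕ => p (x + ((n:ℤ):ℝ))) = fun _ => p x := by
    funext n; exact per_int hp _ x
  rw [h3] at h2
  exact tendsto_nhds_unique tendsto_const_nhds h2

private lemma bounded_of_per {v : ℝ → ℝ} (hc : Continuous v) (hper : ∀ x, v (x + 1) = v x) :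
    ∃ M, ∀ x, |v x| ≤ M := by
  obtain ⟨C, hC⟩ := (isCompact_Icc (a := (0:ℝ)) (b := 1)).exists_bound_of_continuousOn hc.continuousOn
  refine ⟨C, fun x => ?_⟩
  have h1 : v x = v (Int.fract x) := by
    have := per_int hper ⌊x⌋ (Int.fract x)
    rw [Int.fract_add_floor] at this
    exact this
  rw [h1]
  simpa using hC (Int.fract x) ⟨Int.fract_nonneg x, (Int.fract_lt_one x).le⟩

private lemma bounded_of_limits {U vl vr : ℝ → ℝ} (hcU : Continuous U)
    (hvl : ∃ M, ∀ x, |vl x| ≤ M) (hvr : ∃ M, ∀ x, |vr x| ≤ M)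
    (h1 : Tendsto (fun x => U x - vl x) atBot (nhds 0))
    (h2 : Tendsto (fun x => U x - vr x) atTop (nhds 0)) :
    ∃ M, ∀ x, |U x| ≤ M := by
  obtain ⟨Ml, hMl⟩ := hvl
  obtain ⟨Mr, hMr⟩ := hvr
  obtain ⟨a, ha⟩ := eventually_atBot.mp (h1.eventually (eventually_abs_sub_lt 0 one_pos))
  obtain ⟨b, hb⟩ := eventually_atTop.mp (h2.eventually (eventually_abs_sub_lt 0 one_pos))
  obtain ⟨C, hC⟩ := (isCompact_Icc (a := a) (b := b)).exists_bound_of_continuousOn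
    hcU.continuousOn
  refine ⟨max C (max (Ml + 1) (Mr + 1)), fun x => ?_⟩
  rcases le_total x a with hxa | hax
  · have := ha x hxa
    have : |U x - vl x| < 1 := by simpa [abs_sub_comm] using this
    have h4 : |U x| ≤ |vl x| + |U x - vl x| := by
      have := abs_sub_abs_le_abs_sub (U x) (vl x)
      have := abs_add_le (vl x) (U x - vl x)
      calc |U x| = |vl x + (U x - vl x)| := by ring_nf
        _ ≤ |vl x| + |U x - vl x| := abs_add_le _ _
    have : |U x| ≤ Ml + 1 := le_trans h4 (by nlinarith [hMl x])
    exact le_trans this (le_trans (le_max_left _ _) (le_max_right _ _))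
  · rcases le_total b x with hbx | hxb
    · have := hb x hbx
      have : |U x - vr x| < 1 := by simpa [abs_sub_comm] using this
      have h4 : |U x| ≤ |vr x| + |U x - vr x| := by
        calc |U x| = |vr x + (U x - vr x)| := by ring_nf
          _ ≤ |vr x| + |U x - vr x| := abs_add_le _ _
      have : |U x| ≤ Mr + 1 := le_trans h4 (by nlinarith [hMr x])
      exact le_trans this (le_trans (le_max_right _ _) (le_max_right _ _))
    · have := hC x ⟨hax, hxb⟩
      exact le_trans (by simpa using this) (le_max_left _ _)

private lemma exists_lipschitz {A : ℝ → ℝ → ℝ} (hA : ContDiff ℝ 1 (Function.uncurry A))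
    (hper : ∀ y v, A (y + 1) v = A y v) (α M : ℝ) :
    ∃ K : ℝ≥0, ∀ t : ℝ, LipschitzOnWith K (fun y => A t y - α) (Icc (-M) M) := by
  have hfd : Continuous (fun p : ℝ × ℝ => fderiv ℝ (Function.uncurry A) p) :=
    hA.continuous_fderiv one_ne_zero
  obtain ⟨C, hC⟩ := ((isCompact_Icc (a := (0:ℝ)) (b := 1)).prod
    (isCompact_Icc (a := -M) (b := M))).exists_bound_of_continuousOn hfd.continuousOn
  set C' : ℝ := max C 0 with hC'def
  have hC'0 : 0 ≤ C' := le_max_right _ _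
  refine ⟨C'.toNNReal, fun t => ?_⟩
  have hfrac : (fun y => A t y - α) = fun y => A (Int.fract t) y - α := by
    funext y
    have := per_int (v := fun x => A x y) (fun x => hper x y) ⌊t⌋ (Int.fract t)
    rw [Int.fract_add_floor] at this
    rw [this]
  rw [hfrac]
  set s : Set ℝ := Icc (-M) M
  set J : ℝ →L[ℝ] ℝ × ℝ := ((0 : ℝ →L[ℝ] ℝ)).prod (ContinuousLinearMap.id ℝ ℝ) with hJdef
  have key : ∀ τ ∈ Icc (0:ℝ) 1, LipschitzOnWith C'.toNNReal (fun y => A τ y - α) s := by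
    intro τ hτ
    rw [lipschitzOnWith_iff_norm_sub_le]
    intro x hx y hy
    rw [Real.coe_toNNReal _ hC'0]
    have hder : ∀ z ∈ s, HasFDerivWithinAt (fun y => A τ y - α)
        ((fderiv ℝ (Function.uncurry A) (τ, z)).comp J) s z := by
      intro z _
      have h1 : HasFDerivAt (fun y : ℝ => (τ, y)) J z :=
        HasFDerivAt.prodMk (hasFDerivAt_const τ z) (hasFDerivAt_id z)
      have h2 : HasFDerivAt (Function.uncurry A)
          (fderiv ℝ (Function.uncurry A) (τ, z)) (τ, z) :=
        ((hA.differentiable one_ne_zero) (τ, z)).hasFDerivAt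
      exact ((h2.comp z h1).sub_const α).hasFDerivWithinAt
    have hbound : ∀ z ∈ s,
        ‖(fderiv ℝ (Function.uncurry A) (τ, z)).comp J‖ ≤ C' := by
      intro z hz
      have hJ : ‖J‖ ≤ 1 := by
        refine ContinuousLinearMap.opNorm_le_bound _ zero_le_one (fun w => ?_)
        simp [hJdef, Prod.norm_def]
      have hF : ‖fderiv ℝ (Function.uncurry A) (τ, z)‖ ≤ C := by
        simpa using hC (τ, z) ⟨hτ, hz⟩
      have h5 := ContinuousLinearMap.opNorm_comp_le
        (fderiv ℝ (Function.uncurry A) (τ, z)) J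
      have h6 : ‖fderiv ℝ (Function.uncurry A) (τ, z)‖ * ‖J‖ ≤ C * 1 :=
        mul_le_mul hF hJ (norm_nonneg _) (le_trans (norm_nonneg _) hF)
      have : C * 1 ≤ C' := by simp [hC'def]
      linarith
    have := (convex_Icc (-M) M).norm_image_sub_le_of_norm_hasFDerivWithin_le
      hder hbound hy hx
    simpa [Real.norm_eq_abs] using this
  exact key (Int.fract t) ⟨Int.fract_nonneg t, (Int.fract_lt_one t).le⟩

private lemma ode_unique {A : ℝ → ℝ → ℝ} (hA : ContDiff ℝ 1 (Function.uncurry A))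
    (hper : ∀ y v, A (y + 1) v = A y v) {α M : ℝ} {f g : ℝ → ℝ}
    (hf : ContDiff ℝ 1 f) (hf' : ∀ x, deriv f x = A x (f x) - α) (hfb : ∀ x, |f x| ≤ M)
    (hg : ContDiff ℝ 1 g) (hg' : ∀ x, deriv g x = A x (g x) - α) (hgb : ∀ x, |g x| ≤ M)
    {z : ℝ} (hz : f z = g z) : f = g := by
  obtain ⟨K, hK⟩ := exists_lipschitz hA hper α M
  funext x
  have hab : min x z - 1 < z ∧ z < max x z + 1 :=
    ⟨by have := min_le_right x z; linarith, by have := le_max_right x z; linarith⟩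
  have hmem : x ∈ Ioo (min x z - 1) (max x z + 1) :=
    ⟨by have := min_le_left x z; linarith, by have := le_max_left x z; linarith⟩
  have main := ODE_solution_unique_of_mem_Ioo (v := fun t y => A t y - α)
    (s := fun _ => Icc (-M) M) (K := K) (fun t _ => hK t)
    (t₀ := z) (a := min x z - 1) (b := max x z + 1) ⟨hab.1, hab.2⟩
    (f := f) (g := g) ?_ ?_ hz
  · exact main hmem
  · intro t _
    constructor
    · have := ((hf.differentiable one_ne_zero) t).hasDerivAt
      rwa [hf' t] at this
    · exact abs_le.mp (hfb t) |>.imp (fun h => h) (fun h => h) |> fun h => ⟨h.1, h.2⟩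
  · intro t _
    constructor
    · have := ((hg.differentiable one_ne_zero) t).hasDerivAt
      rwa [hg' t] at this
    · exact abs_le.mp (hgb t) |>.imp (fun h => h) (fun h => h) |> fun h => ⟨h.1, h.2⟩

private lemma clamp_err {a b M t : ℝ} (h1 : a ≤ M) (h2 : M ≤ b) :
    |t - max a (min t b)| ≤ |t - M| := by
  rcases le_total t a with h | h
  · rw [min_eq_left (le_trans h (le_trans h1 h2)), max_eq_left h]
    rw [abs_of_nonpos (by linarith), abs_of_nonpos (by linarith)]
    linarith
  · rcases le_total b t with h' | h'
    · rw [min_eq_right h', max_eq_right (le_trans h1 h2)]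
      rw [abs_of_nonneg (by linarith), abs_of_nonneg (by linarith)]
      linarith
    · rw [min_eq_left h', max_eq_right h]
      simp [abs_nonneg]

/-- mass correction: find `h` with `0 ≤ h ≤ g` of prescribed integral `m`. -/
private lemma exists_correction {g : ℝ → ℝ} {m : ℝ}
    (hloc : ∀ a b : ℝ, IntervalIntegrable g volume a b)
    (hgpos : ∀ x, 0 ≤ g x) (hm : 0 ≤ m)
    (hR : ∃ R : ℝ, 0 ≤ R ∧ m ≤ ∫ x in (-R)..R, g x) :
    ∃ h : ℝ → ℝ, Integrable h ∧ (∀ x, 0 ≤ h x) ∧ (∀ x, h x ≤ g x) ∧ (∫ x, h x) = m := by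
  obtain ⟨R0, hR0, hR0m⟩ := hR
  set F : ℝ → ℝ := fun x => ∫ t in (0:ℝ)..x, g t with hF
  have hFc : Continuous F := intervalIntegral.continuous_primitive hloc 0
  set φ : ℝ → ℝ := fun R => F R - F (-R) with hφ
  have hφc : Continuous φ := hFc.sub (hFc.comp continuous_neg)
  have hφ0 : φ 0 = 0 := by simp [hφ]
  have hφval : ∀ R : ℝ, φ R = ∫ x in (-R)..R, g x := by
    intro R
    rw [hφ]
    simp only [hF]
    have h1 := intervalIntegral.integral_add_adjacent_intervals (a := -R) (b := 0) (c := R)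
      (hloc _ _) (hloc _ _)
    have h2 : (∫ t in (0:ℝ)..(-R), g t) = - ∫ t in (-R)..(0:ℝ), g t :=
      intervalIntegral.integral_symm _ _
    rw [h2, ← h1]
    ring
  have hmem : m ∈ Icc (φ 0) (φ R0) := ⟨by rw [hφ0]; exact hm, by rw [hφval]; exact hR0m⟩
  obtain ⟨R, hRmem, hRm⟩ := intermediate_value_Icc hR0 hφc.continuousOn hmem
  have hRpos : 0 ≤ R := hRmem.1
  refine ⟨(Set.Ioc (-R) R).indicator g, ?_, ?_, ?_, ?_⟩
  · have hint : IntegrableOn g (Set.Ioc (-R) R) :=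
      (intervalIntegrable_iff_integrableOn_Ioc_of_le (by linarith : -R ≤ R)).mp (hloc _ _)
    exact hint.integrable_indicator measurableSet_Ioc
  · intro x; exact Set.indicator_nonneg (fun y _ => hgpos y) x
  · intro x
    classical
    by_cases hx : x ∈ Set.Ioc (-R) R
    · rw [Set.indicator_of_mem hx]
    · rw [Set.indicator_of_notMem hx]; exact hgpos x
  · rw [integral_indicator measurableSet_Ioc]
    rw [← intervalIntegral.integral_of_le (by linarith : -R ≤ R)]
    rw [← hφval]; exact hRm

private lemma adjust {c U Um : ℝ → ℝ} (hcmeas : Measurable c)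
    (hUc : Continuous U) (hUmc : Continuous Um)
    (hle : ∀ x, Um x ≤ c x) (hstrict : ∀ x, Um x < U x)
    (hcU : Integrable (fun x => c x - U x))
    (hm : 0 ≤ ∫ x, (c x - U x)) :
    ∃ h : ℝ → ℝ, Integrable h ∧ (∀ x, 0 ≤ h x) ∧ (∀ x, h x ≤ c x - Um x) ∧
      (∫ x, h x) = ∫ x, (c x - U x) := by
  set m := ∫ x, (c x - U x) with hmdef
  have hg : (fun x => c x - Um x) = fun x => (c x - U x) + (U x - Um x) :=
    funext fun x => by ring
  have hUUm : Continuous (fun x => U x - Um x) := hUc.sub hUmc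
  have hloc : ∀ a b : ℝ, IntervalIntegrable (fun x => c x - Um x) volume a b := by
    intro a b
    rw [hg]
    exact (hcU.intervalIntegrable).add (hUUm.intervalIntegrable _ _)
  have hgpos : ∀ x, 0 ≤ c x - Um x := fun x => by linarith [hle x]
  -- the fixed positive quantity
  set c1 := ∫ x in (-1:ℝ)..1, (U x - Um x) with hc1def
  have hc1 : 0 < c1 :=
    intervalIntegral.intervalIntegral_pos_of_pos_on (hUUm.intervalIntegrable _ _)
      (fun x _ => sub_pos.mpr (hstrict x)) (by norm_num)
  -- convergence of truncated integrals of c - U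
  have htend : Tendsto (fun n : ℕ => ∫ x in (-(n:ℝ))..(n:ℝ), (c x - U x)) atTop (nhds m) :=
    MeasureTheory.intervalIntegral_tendsto_integral hcU
      (tendsto_neg_atBot_iff.mpr tendsto_natCast_atTop_atTop) tendsto_natCast_atTop_atTop
  have hev : ∀ᶠ n : ℕ in atTop, |(∫ x in (-(n:ℝ))..(n:ℝ), (c x - U x)) - m| < c1 :=
    htend.eventually (eventually_abs_sub_lt m hc1)
  obtain ⟨N, hN1, hNev⟩ : ∃ N : ℕ, 1 ≤ N ∧
      |(∫ x in (-(N:ℝ))..(N:ℝ), (c x - U x)) - m| < c1 := by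
    obtain ⟨N0, hN0⟩ := eventually_atTop.mp hev
    exact ⟨max N0 1, le_max_right _ _, hN0 _ (le_max_left _ _)⟩
  -- monotonicity of the integral of U - Um
  have hmono : c1 ≤ ∫ x in (-(N:ℝ))..(N:ℝ), (U x - Um x) := by
    have hN1' : (1:ℝ) ≤ (N:ℝ) := by exact_mod_cast hN1
    rw [hc1def, intervalIntegral.integral_of_le (by norm_num : (-1:ℝ) ≤ 1),
      intervalIntegral.integral_of_le (by linarith : -(N:ℝ) ≤ (N:ℝ))]
    refine setIntegral_mono_set ?_ ?_ ?_
    · exact hUUm.integrableOn_Ioc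
    · exact Filter.Eventually.of_forall (fun x => sub_nonneg.mpr (hstrict x).le)
    · exact HasSubset.Subset.eventuallyLE (Set.Ioc_subset_Ioc (by linarith) hN1')
  have hsum : m ≤ ∫ x in (-(N:ℝ))..(N:ℝ), (c x - Um x) := by
    have hadd : (∫ x in (-(N:ℝ))..(N:ℝ), (c x - Um x)) =
        (∫ x in (-(N:ℝ))..(N:ℝ), (c x - U x)) + ∫ x in (-(N:ℝ))..(N:ℝ), (U x - Um x) := by
      rw [hg]
      exact intervalIntegral.integral_add (hcU.intervalIntegrable) (hUUm.intervalIntegrable _ _)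
    have habs := abs_lt.mp hNev
    rw [hadd]
    linarith
  obtain ⟨h, hint, hpos, hle', hval⟩ := exists_correction hloc hgpos hm
    ⟨(N:ℝ), by positivity, hsum⟩
  exact ⟨h, hint, hpos, hle', hval⟩

private lemma shock_translate {A : ℝ → ℝ → ℝ} {α : ℝ} {vl vr U : ℝ → ℝ}
    (hper : ∀ y v, A (y + 1) v = A y v)
    (hvlper : ∀ x, vl (x + 1) = vl x) (hvrper : ∀ x, vr (x + 1) = vr x)
    (hU : ShockProfile A α vl vr U) (n : ℤ) :
    ShockProfile A α vl vr (fun x => U (x + n)) := by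
  obtain ⟨hC, hD, hB, hT⟩ := hU
  refine ⟨hC.comp (contDiff_id.add contDiff_const), fun x => ?_, ?_, ?_⟩
  · have h1 : deriv (fun x => U (x + (n:ℝ))) x = deriv U (x + n) := deriv_comp_add_const U _ x
    rw [h1, hD (x + n)]
    congr 1
    exact per_int (v := fun t => A t (U (x + n))) (fun t => hper t _) n x
  · have hcomp : Tendsto (fun x : ℝ => x + (n:ℝ)) atBot atBot :=
      tendsto_atBot_add_const_right atBot (n:ℝ) tendsto_id
    have := hB.comp hcomp
    have heq : ((fun y => U y - vl y) ∘ fun x : ℝ => x + n) = fun x => U (x + n) - vl x := by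
      funext x; simp [Function.comp, per_int hvlper n x]
    rwa [heq] at this
  · have hcomp : Tendsto (fun x : ℝ => x + (n:ℝ)) atTop atTop :=
      tendsto_atTop_add_const_right atTop (n:ℝ) tendsto_id
    have := hT.comp hcomp
    have heq : ((fun y => U y - vr y) ∘ fun x : ℝ => x + n) = fun x => U (x + n) - vr x := by
      funext x; simp [Function.comp, per_int hvrper n x]
    rwa [heq] at this

private lemma key_profiles {A : ℝ → ℝ → ℝ}
    (hA : ContDiff ℝ 1 (Function.uncurry A))
    (hper : ∀ y v, A (y + 1) v = A y v)
    {α : ℝ} {vm vp : ℝ → ℝ}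
    (hvm : PerStat A α vm) (hvp : PerStat A α vp)
    (hlt : ∀ x, vm x < vp x)
    {vl vr : ℝ → ℝ}
    (hlr : (vl = vm ∧ vr = vp) ∨ (vl = vp ∧ vr = vm))
    {U : ℝ → ℝ} (hU : ShockProfile A α vl vr U) :
    ∃ Wm Wp : ℕ → ℝ → ℝ,
      (∀ n, ShockProfile A α vl vr (Wm n)) ∧ (∀ n, ShockProfile A α vl vr (Wp n)) ∧
      (∀ n x, Wm n x < U x) ∧ (∀ n x, U x < Wp n x) ∧
      (∀ x, Tendsto (fun n => Wm n x) atTop (nhds (vm x))) ∧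
      (∀ x, Tendsto (fun n => Wp n x) atTop (nhds (vp x))) := by
  -- basic facts about vl, vr
  have hvlper : ∀ x, vl (x + 1) = vl x := by
    rcases hlr with ⟨h, _⟩ | ⟨h, _⟩ <;> rw [h] <;> [exact hvm.2.1; exact hvp.2.1]
  have hvrper : ∀ x, vr (x + 1) = vr x := by
    rcases hlr with ⟨_, h⟩ | ⟨_, h⟩ <;> rw [h] <;> [exact hvp.2.1; exact hvm.2.1]
  have hvlc : Continuous vl := by
    rcases hlr with ⟨h, _⟩ | ⟨h, _⟩ <;> rw [h] <;> [exact hvm.1.continuous; exact hvp.1.continuous]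
  have hvrc : Continuous vr := by
    rcases hlr with ⟨_, h⟩ | ⟨_, h⟩ <;> rw [h] <;> [exact hvp.1.continuous; exact hvm.1.continuous]
  obtain ⟨M, hM⟩ := bounded_of_limits hU.1.continuous
    (bounded_of_per hvlc hvlper) (bounded_of_per hvrc hvrper) hU.2.2.1 hU.2.2.2
  -- the translated function satisfies the same ODE
  have htrans_ode : ∀ x, deriv (fun x => U (x + 1)) x = A x (U (x + 1)) - α := by
    intro x
    have h1 : deriv (fun x => U (x + (1:ℝ))) x = deriv U (x + 1) := deriv_comp_add_const U _ x
    rw [h1, hU.2.1 (x + 1), hper x (U (x+1))]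
  -- nonvanishing of d
  have hne : ∀ x, U (x + 1) ≠ U x := by
    intro z hz
    have heq : (fun x => U (x + 1)) = U :=
      ode_unique hA hper (hU.1.comp (contDiff_id.add contDiff_const)) htrans_ode
        (fun x => hM (x + 1)) hU.1 hU.2.1 hM hz
    have hUper : ∀ x, U (x + 1) = U x := fun x => congrFun heq x
    have hUvl : ∀ x, U x = vl x := by
      intro x
      have hp : ∀ x, (U (x+1) - vl (x+1)) = U x - vl x := by
        intro x; rw [hUper x, hvlper x]
      have := per_tendsto_zero_atBot (p := fun x => U x - vl x) hp hU.2.2.1 x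
      linarith
    have hUvr : ∀ x, U x = vr x := by
      intro x
      have hp : ∀ x, (U (x+1) - vr (x+1)) = U x - vr x := by
        intro x; rw [hUper x, hvrper x]
      have := per_tendsto_zero_atTop (p := fun x => U x - vr x) hp hU.2.2.2 x
      linarith
    have : vl 0 = vr 0 := (hUvl 0).symm.trans (hUvr 0)
    rcases hlr with ⟨h1, h2⟩ | ⟨h1, h2⟩ <;> rw [h1, h2] at this <;>
      [exact absurd this (ne_of_lt (hlt 0)); exact absurd this.symm (ne_of_lt (hlt 0))]
  -- sign dichotomy
  have hsign : (∀ x, U x < U (x + 1)) ∨ (∀ x, U (x + 1) < U x) := by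
    by_contra hcon
    push_neg at hcon
    obtain ⟨⟨x1, hx1⟩, ⟨x2, hx2⟩⟩ := hcon
    have hd1 : U (x1 + 1) - U x1 ≤ 0 := by linarith
    have hd2 : 0 ≤ U (x2 + 1) - U x2 := by linarith
    have hcont : ContinuousOn (fun x => U (x + 1) - U x) (uIcc x1 x2) :=
      ((hU.1.continuous.comp (continuous_id.add continuous_const)).sub
        hU.1.continuous).continuousOn
    have h0 : (0:ℝ) ∈ uIcc (U (x1 + 1) - U x1) (U (x2 + 1) - U x2) := by
      rw [Set.mem_uIcc]; left; exact ⟨hd1, hd2⟩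
    obtain ⟨c, _, hc⟩ := intermediate_value_uIcc hcont h0
    exact hne c (sub_eq_zero.mp (by simpa using hc))
  -- limit lemmas
  have hTl : ∀ (x : ℝ) (c : ℕ → ℤ), Tendsto (fun n => ((c n : ℤ) : ℝ)) atTop atBot →
      Tendsto (fun n => U (x + ((c n : ℤ) : ℝ))) atTop (nhds (vl x)) := by
    intro x c hc
    have hcomp : Tendsto (fun n => x + ((c n : ℤ) : ℝ)) atTop atBot :=
      tendsto_atBot_add_const_left atTop x hc
    have h0 := hU.2.2.1.comp hcomp
    have heqf : ((fun y => U y - vl y) ∘ fun n => x + ((c n : ℤ):ℝ)) =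
        fun n => U (x + ((c n : ℤ):ℝ)) - vl x := by
      funext n; simp [Function.comp, per_int hvlper (c n) x]
    rw [heqf] at h0
    have := h0.add_const (vl x)
    simpa using this
  have hTr : ∀ (x : ℝ) (c : ℕ → ℤ), Tendsto (fun n => ((c n : ℤ) : ℝ)) atTop atTop →
      Tendsto (fun n => U (x + ((c n : ℤ) : ℝ))) atTop (nhds (vr x)) := by
    intro x c hc
    have hcomp : Tendsto (fun n => x + ((c n : ℤ) : ℝ)) atTop atTop :=
      tendsto_atTop_add_const_left atTop x hc
    have h0 := hU.2.2.2.comp hcomp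
    have heqf : ((fun y => U y - vr y) ∘ fun n => x + ((c n : ℤ):ℝ)) =
        fun n => U (x + ((c n : ℤ):ℝ)) - vr x := by
      funext n; simp [Function.comp, per_int hvrper (c n) x]
    rw [heqf] at h0
    have := h0.add_const (vr x)
    simpa using this
  -- integer cast sequences
  have hcast_top : Tendsto (fun n : ℕ => (((n:ℤ) + 1 : ℤ):ℝ)) atTop atTop := by
    have : Tendsto (fun n : ℕ => (n:ℝ) + 1) atTop atTop :=
      tendsto_atTop_add_const_right atTop 1 tendsto_natCast_atTop_atTop
    convert this using 2 with n
    push_cast; ring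
  have hcast_bot : Tendsto (fun n : ℕ => ((-(n:ℤ) - 1 : ℤ):ℝ)) atTop atBot := by
    have : Tendsto (fun n : ℕ => -(n:ℝ) + -1) atTop atBot :=
      tendsto_atBot_add_const_right atTop (-1)
        (tendsto_neg_atBot_iff.mpr tendsto_natCast_atTop_atTop)
    convert this using 2 with n
    push_cast; ring
  have hcast_top' : Tendsto (fun n : ℕ => ((n:ℤ):ℝ)) atTop atTop := by
    have h := tendsto_natCast_atTop_atTop (R := ℝ)
    have heq : (fun n : ℕ => ((n:ℤ):ℝ)) = (fun n : ℕ => (n:ℝ)) := by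
      funext n; push_cast; ring
    rw [heq]; exact h
  have hcast_bot' : Tendsto (fun n : ℕ => ((-(n:ℤ) : ℤ):ℝ)) atTop atBot := by
    have : Tendsto (fun n : ℕ => -(n:ℝ)) atTop atBot :=
      tendsto_neg_atBot_iff.mpr tendsto_natCast_atTop_atTop
    convert this using 2 with n
    push_cast; ring
  rcases hsign with hd | hd
  · -- U is increasing under unit translation
    have hstrict : ∀ x, StrictMono (fun k : ℤ => U (x + (k:ℝ))) := by
      intro x
      apply strictMono_int_of_lt_succ
      intro k
      have h1 := hd (x + (k:ℝ))
      simpa [← add_assoc] using h1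
    rcases hlr with ⟨hl, hr⟩ | ⟨hl, hr⟩
    · refine ⟨fun n x => U (x + ((-(n:ℤ) - 1 : ℤ):ℝ)),
        fun n x => U (x + (((n:ℤ) + 1 : ℤ):ℝ)), ?_, ?_, ?_, ?_, ?_, ?_⟩
      · intro n; exact shock_translate hper hvlper hvrper hU _
      · intro n; exact shock_translate hper hvlper hvrper hU _
      · intro n x
        have := hstrict x (show (-(n:ℤ) - 1) < (0:ℤ) by omega)
        simpa using this
      · intro n x
        have := hstrict x (show (0:ℤ) < ((n:ℤ) + 1) by omega)
        simpa using this
      · intro x; rw [← hl]; exact hTl x _ hcast_bot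
      · intro x; rw [← hr]; exact hTr x _ hcast_top
    · exfalso
      have h1 := hTr 0 (fun n => (n:ℤ)) hcast_top'
      have hub : U 0 ≤ vr 0 := by
        refine ge_of_tendsto' h1 (fun n => ?_)
        have := (hstrict 0).monotone (show (0:ℤ) ≤ (n:ℤ) by omega)
        simpa using this
      have h2 := hTl 0 (fun n => -(n:ℤ)) hcast_bot'
      have hlb : vl 0 ≤ U 0 := by
        refine le_of_tendsto' h2 (fun n => ?_)
        have := (hstrict 0).monotone (show (-(n:ℤ)) ≤ (0:ℤ) by omega)
        simpa using this
      rw [hl] at hlb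
      rw [hr] at hub
      linarith [hlt 0]
  · -- U is decreasing under unit translation
    have hstrict : ∀ x, StrictAnti (fun k : ℤ => U (x + (k:ℝ))) := by
      intro x
      apply strictAnti_int_of_succ_lt
      intro k
      have h1 := hd (x + (k:ℝ))
      simpa [← add_assoc] using h1
    rcases hlr with ⟨hl, hr⟩ | ⟨hl, hr⟩
    · exfalso
      have h1 := hTr 0 (fun n => (n:ℤ)) hcast_top'
      have hub : vr 0 ≤ U 0 := by
        refine le_of_tendsto' h1 (fun n => ?_)
        have := (hstrict 0).antitone (show (0:ℤ) ≤ (n:ℤ) by omega)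
        simpa using this
      have h2 := hTl 0 (fun n => -(n:ℤ)) hcast_bot'
      have hlb : U 0 ≤ vl 0 := by
        refine ge_of_tendsto' h2 (fun n => ?_)
        have := (hstrict 0).antitone (show (-(n:ℤ)) ≤ (0:ℤ) by omega)
        simpa using this
      rw [hl] at hlb
      rw [hr] at hub
      linarith [hlt 0]
    · refine ⟨fun n x => U (x + (((n:ℤ) + 1 : ℤ):ℝ)),
        fun n x => U (x + ((-(n:ℤ) - 1 : ℤ):ℝ)), ?_, ?_, ?_, ?_, ?_, ?_⟩
      · intro n; exact shock_translate hper hvlper hvrper hU _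
      · intro n; exact shock_translate hper hvlper hvrper hU _
      · intro n x
        have := hstrict x (show (0:ℤ) < ((n:ℤ) + 1) by omega)
        simpa using this
      · intro n x
        have := hstrict x (show (-(n:ℤ) - 1) < (0:ℤ) by omega)
        simpa using this
      · intro x; rw [← hr]; exact hTr x _ hcast_top
      · intro x; rw [← hl]; exact hTl x _ hcast_bot


/-- approximation, in `L¹` and with zero total mass, of a datum
squeezed between `v₋` and `v₊` by one squeezed between two shock profiles. -/
theorem approximation_between_shock_profiles
    (A : ℝ → ℝ → ℝ)
    (hA : ContDiff ℝ 1 (Function.uncurry A))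
    (hper : ∀ y v, A (y + 1) v = A y v)
    (α : ℝ) (vm vp : ℝ → ℝ)
    (hvm : PerStat A α vm) (hvp : PerStat A α vp)
    (hlt : ∀ x, vm x < vp x)
    (holeinik : ∀ w : ℝ → ℝ, PerStat A α w →
      (∀ x, vm x ≤ w x ∧ w x ≤ vp x) → w = vm ∨ w = vp)
    (vl vr : ℝ → ℝ)
    (hlr : (vl = vm ∧ vr = vp) ∨ (vl = vp ∧ vr = vm))
    (U : ℝ → ℝ) (hU : ShockProfile A α vl vr U)
    (u : ℝ → ℝ) (humeas : Measurable u) (hubd : ∃ M, ∀ x, |u x| ≤ M)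
    (huU : Integrable (fun x => u x - U x))
    (huU0 : (∫ x : ℝ, (u x - U x)) = 0)
    (hsq : ∀ᵐ y : ℝ ∂volume, vm y ≤ u y ∧ u y ≤ vp y) :
    ∀ ε : ℝ, 0 < ε →
      ∃ uε : ℝ → ℝ,
        Integrable (fun x => uε x - U x) ∧
        (∫ x : ℝ, (uε x - U x)) = 0 ∧
        ∃ Um Up : ℝ → ℝ,
          ShockProfile A α vl vr Um ∧ ShockProfile A α vl vr Up ∧
          Integrable (fun x => u x - uε x) ∧
          (∫ x : ℝ, |u x - uε x|) ≤ ε ∧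
          ∀ᵐ y : ℝ ∂volume, Um y ≤ uε y ∧ uε y ≤ Up y := by
  intro ε hε
  obtain ⟨Wm, Wp, hWmS, hWpS, hWmlt, hWplt, hWmT, hWpT⟩ :=
    key_profiles hA hper hvm hvp hlt hlr hU
  have hWmc : ∀ n, Continuous (Wm n) := fun n => (hWmS n).1.continuous
  have hWpc : ∀ n, Continuous (Wp n) := fun n => (hWpS n).1.continuous
  set C : ℕ → ℝ → ℝ := fun n x => max (Wm n x) (min (u x) (Wp n x)) with hCdef
  have hCmeas : ∀ n, Measurable (C n) :=
    fun n => ((hWmc n).measurable).max (humeas.min (hWpc n).measurable)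
  have hdom : ∀ n x, |u x - C n x| ≤ |u x - U x| :=
    fun n x => clamp_err (hWmlt n x).le (hWplt n x).le
  have hint : ∀ n, Integrable (fun x => u x - C n x) := by
    intro n
    refine Integrable.mono' huU.abs ((humeas.sub (hCmeas n)).aestronglyMeasurable) ?_
    exact Filter.Eventually.of_forall (fun x => by rw [Real.norm_eq_abs]; exact hdom n x)
  -- dominated convergence
  have htendI : Tendsto (fun n => ∫ x, |u x - C n x|) atTop (nhds 0) := by
    have h0 : (0:ℝ) = ∫ _ : ℝ, (0:ℝ) := by simp
    rw [h0]
    refine MeasureTheory.tendsto_integral_of_dominated_convergence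
      (fun x => |u x - U x|) (fun n => ((humeas.sub (hCmeas n)).abs).aestronglyMeasurable)
      huU.abs (fun n => Filter.Eventually.of_forall (fun x => by
        rw [Real.norm_eq_abs, abs_abs]; exact hdom n x)) ?_
    filter_upwards [hsq] with x hx
    have h1 : Tendsto (fun n => C n x) atTop (nhds (max (vm x) (min (u x) (vp x)))) :=
      (hWmT x).max (tendsto_const_nhds.min (hWpT x))
    have h2 : max (vm x) (min (u x) (vp x)) = u x := by
      rw [min_eq_left hx.2, max_eq_right hx.1]
    rw [h2] at h1
    have h3 : Tendsto (fun n => u x - C n x) atTop (nhds 0) := by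
      have := tendsto_const_nhds (x := u x) (f := atTop (α := ℕ)) |>.sub h1
      simpa using this
    simpa using h3.abs
  obtain ⟨n, hn⟩ := (htendI.eventually_lt_const (by linarith : (0:ℝ) < ε/3)).exists
  set c : ℝ → ℝ := C n with hcdef
  set Um : ℝ → ℝ := Wm n with hUmdef
  set Up : ℝ → ℝ := Wp n with hUpdef
  have hIle : (∫ x, |u x - c x|) ≤ ε/3 := hn.le
  have hcu : Integrable (fun x => u x - c x) := hint n
  have hcU : Integrable (fun x => c x - U x) := by
    have h1 : (fun x => c x - U x) = (fun x => (-(u x - c x)) + (u x - U x)) :=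
      funext fun x => by ring
    rw [h1]; exact hcu.neg.add huU
  have hmval : (∫ x, (c x - U x)) = -∫ x, (u x - c x) := by
    have h1 : (fun x => c x - U x) = (fun x => (u x - U x) - (u x - c x)) :=
      funext fun x => by ring
    rw [h1, integral_sub huU hcu, huU0, zero_sub]
  have hmabs : |∫ x, (c x - U x)| ≤ ε/3 := by
    rw [hmval, abs_neg]
    calc |∫ x, (u x - c x)| ≤ ∫ x, |u x - c x| := by
          simpa [Real.norm_eq_abs] using norm_integral_le_integral_norm (fun x => u x - c x)
      _ ≤ ε/3 := hIle
  have hUmled : ∀ x, Um x ≤ c x := fun x => le_max_left _ _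
  have hcleUp : ∀ x, c x ≤ Up x := fun x =>
    max_le (le_trans (hWmlt n x).le (hWplt n x).le) (min_le_right _ _)
  rcases le_or_gt 0 (∫ x, (c x - U x)) with hm | hm
  · -- need to remove mass
    obtain ⟨h, hinth, hpos, hhle, hval⟩ := adjust (hCmeas n) hU.1.continuous (hWmc n)
      hUmled (hWmlt n) hcU hm
    refine ⟨fun x => c x - h x, ?_, ?_, Um, Up, hWmS n, hWpS n, ?_, ?_, ?_⟩
    · have h1 : (fun x => (c x - h x) - U x) = fun x => (c x - U x) - h x :=
        funext fun x => by ring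
      rw [h1]; exact hcU.sub hinth
    · have h1 : (fun x => (c x - h x) - U x) = fun x => (c x - U x) - h x :=
        funext fun x => by ring
      rw [h1, integral_sub hcU hinth, hval, sub_self]
    · have h1 : (fun x => u x - (c x - h x)) = fun x => (u x - c x) + h x :=
        funext fun x => by ring
      rw [h1]; exact hcu.add hinth
    · have hptw : ∀ x, |u x - (c x - h x)| ≤ |u x - c x| + h x := by
        intro x
        calc |u x - (c x - h x)| = |(u x - c x) + h x| := by ring_nf
          _ ≤ |u x - c x| + |h x| := abs_add_le _ _
          _ = |u x - c x| + h x := by rw [abs_of_nonneg (hpos x)]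
      have hint2 : Integrable (fun x => u x - (c x - h x)) := by
        have h1 : (fun x => u x - (c x - h x)) = fun x => (u x - c x) + h x :=
          funext fun x => by ring
        rw [h1]; exact hcu.add hinth
      have hIle2 : (∫ x, |u x - (c x - h x)|) ≤ ∫ x, (|u x - c x| + h x) := by
        refine integral_mono hint2.abs (hcu.abs.add hinth) hptw
      have h2 : (∫ x, (|u x - c x| + h x)) = (∫ x, |u x - c x|) + ∫ x, h x :=
        integral_add hcu.abs hinth
      have h3 : (∫ x, h x) ≤ ε/3 := by
        rw [hval]
        exact le_trans (le_abs_self _) hmabs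
      linarith
    · refine Filter.Eventually.of_forall (fun x => ⟨?_, ?_⟩)
      · show Um x ≤ c x - h x
        have h2 : h x ≤ c x - Um x := hhle x
        linarith
      · show c x - h x ≤ Up x
        have h2 : (0:ℝ) ≤ h x := hpos x
        linarith [hcleUp x]
  · -- need to add mass
    have hUltUp : ∀ x, U x < Up x := hWplt n
    have hm' : 0 ≤ ∫ x, ((-(c x)) - (-(U x))) := by
      have h1 : (fun x => (-(c x)) - (-(U x))) = fun x => -(c x - U x) :=
        funext fun x => by ring
      rw [h1, integral_neg]
      linarith
    have hcU' : Integrable (fun x => (-(c x)) - (-(U x))) := by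
      have h1 : (fun x => (-(c x)) - (-(U x))) = fun x => -(c x - U x) :=
        funext fun x => by ring
      rw [h1]; exact hcU.neg
    obtain ⟨h, hinth, hpos, hhle, hval⟩ := adjust (hCmeas n).neg
      hU.1.continuous.neg (hWpc n).neg
      (fun x => neg_le_neg (hcleUp x)) (fun x => neg_lt_neg (hUltUp x)) hcU' hm'
    have hvalm : (∫ x, h x) = -∫ x, (c x - U x) := by
      rw [hval]; show (∫ x, (-(c x)) - (-(U x))) = _
      have h1 : (fun x => (-(c x)) - (-(U x))) = fun x => -(c x - U x) :=
        funext fun x => by ring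
      rw [h1, integral_neg]
    refine ⟨fun x => c x + h x, ?_, ?_, Um, Up, hWmS n, hWpS n, ?_, ?_, ?_⟩
    · have h1 : (fun x => (c x + h x) - U x) = fun x => (c x - U x) + h x :=
        funext fun x => by ring
      rw [h1]; exact hcU.add hinth
    · have h1 : (fun x => (c x + h x) - U x) = fun x => (c x - U x) + h x :=
        funext fun x => by ring
      rw [h1, integral_add hcU hinth, hvalm, add_neg_cancel]
    · have h1 : (fun x => u x - (c x + h x)) = fun x => (u x - c x) - h x :=
        funext fun x => by ring
      rw [h1]; exact hcu.sub hinth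
    · have hptw : ∀ x, |u x - (c x + h x)| ≤ |u x - c x| + h x := by
        intro x
        calc |u x - (c x + h x)| = |(u x - c x) - h x| := by ring_nf
          _ ≤ |u x - c x| + |h x| := abs_sub _ _
          _ = |u x - c x| + h x := by rw [abs_of_nonneg (hpos x)]
      have hint2 : Integrable (fun x => u x - (c x + h x)) := by
        have h1 : (fun x => u x - (c x + h x)) = fun x => (u x - c x) - h x :=
          funext fun x => by ring
        rw [h1]; exact hcu.sub hinth
      have hIle2 : (∫ x, |u x - (c x + h x)|) ≤ ∫ x, (|u x - c x| + h x) := by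
        refine integral_mono hint2.abs (hcu.abs.add hinth) hptw
      have h2 : (∫ x, (|u x - c x| + h x)) = (∫ x, |u x - c x|) + ∫ x, h x :=
        integral_add hcu.abs hinth
      have h3 : (∫ x, h x) ≤ ε/3 := by
        rw [hvalm]
        exact le_trans (neg_le_abs _) hmabs
      linarith
    · refine Filter.Eventually.of_forall (fun x => ⟨?_, ?_⟩)
      · show Um x ≤ c x + h x
        have h2 : (0:ℝ) ≤ h x := hpos x
        linarith [hUmled x]
      · show c x + h x ≤ Up x
        have h2 : h x ≤ -(c x) - -(Up x) := hhle x
        linarith
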